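/- For every sublinear function ρ and all reals K ≥ 1, C ≥ 0, J ≥ 0, r ≥ 0 there exists a constant R = R(ρ,K,C,r,J) ≥ 0 with the following property. Let Y be a proper geodesic metric space, o ∈ Y, α : [0,∞) → Y a ρ-contracting geodesic ray with α(0) = o, and β : [0,∞) → Y a continuous (K,C)-quasi-geodesic ray with β(0) = o. If there exists a point p in the image of α with d(o,p) ≥ R and d(p, im β) ≤ J, then the image of β intersects the closed κ(ρ,K,C)-neighbourhood of (im α) ∖ B(o,r), where B(o,r) is the open ball of radius r about o; that is, β fellow-travels along α for distance r. -/

import Mathlib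

open Set Metric

/-- A function `ρ : ℝ → ℝ` (thought of as defined on `[0,∞)`) is sublinear:
non-decreasing (on `[0,∞)`), eventually non-negative, and `ρ r / r → 0`. -/
def Sublinear (ρ : ℝ → ℝ) : Prop :=
  MonotoneOn ρ (Ici 0) ∧ (∃ R : ℝ, ∀ r ≥ R, 0 ≤ ρ r) ∧
    Filter.Tendsto (fun r => ρ r / r) Filter.atTop (nhds 0)

/-- Closest-point projection of `y` onto `Z`. -/
def ClosestPoints {Y : Type*} [MetricSpace Y] (Z : Set Y) (y : Y) : Set Y :=
  {z ∈ Z | dist y z = infDist y Z}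

/-- `Z` is a `ρ`-contracting subset. -/
def IsContracting {Y : Type*} [MetricSpace Y] (ρ : ℝ → ℝ) (Z : Set Y) : Prop :=
  ∀ x y : Y, x ∉ Z → y ∉ Z → dist x y < infDist y Z →
    diam (ClosestPoints Z x ∪ ClosestPoints Z y) ≤ ρ (infDist y Z)

/-- `β : [0,∞) → Y` is a `(K,C)`-quasi-geodesic ray. -/
def IsQGRay {Y : Type*} [MetricSpace Y] (K C : ℝ) (β : ℝ → Y) : Prop :=
  ∀ s ≥ (0:ℝ), ∀ t ≥ (0:ℝ),
    (1/K) * |s - t| - C ≤ dist (β s) (β t) ∧ dist (β s) (β t) ≤ K * |s - t| + C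

/-- `α : [0,∞) → Y` is a geodesic ray (isometric embedding of `[0,∞)`). -/
def IsGeodesicRay {Y : Type*} [MetricSpace Y] (α : ℝ → Y) : Prop :=
  ∀ s ≥ (0:ℝ), ∀ t ≥ (0:ℝ), dist (α s) (α t) = |s - t|

/-- κ(ρ,K,C) = max(3K², 3C, 1 + inf{R ≥ 0 : 3K²ρ(r) ≤ r for all r ≥ R}). -/
noncomputable def kappa (ρ : ℝ → ℝ) (K C : ℝ) : ℝ :=
  max (max (3 * K ^ 2) (3 * C))
    (1 + sInf {R : ℝ | 0 ≤ R ∧ ∀ r ≥ R, 3 * K ^ 2 * ρ r ≤ r})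

/-- κ'(ρ,K,C) = (K²+2)(2κ(ρ,K,C)+C). -/
noncomputable def kappa' (ρ : ℝ → ℝ) (K C : ℝ) : ℝ :=
  (K ^ 2 + 2) * (2 * kappa ρ K C + C)

/-- A metric space is geodesic: any two points are joined by an isometric
embedding of a compact interval. -/
def GeodesicSpace (Y : Type*) [MetricSpace Y] : Prop :=
  ∀ x y : Y, ∃ γ : ℝ → Y, γ 0 = x ∧ γ (dist x y) = y ∧
    ∀ s ∈ Icc 0 (dist x y), ∀ t ∈ Icc 0 (dist x y), dist (γ s) (γ t) = |s - t|

set_option maxHeartbeats 1000000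

/-- Corollary 2.5 (reformulation of Cashen–Mackay's Lemma 4.6): for every sublinear
`ρ` and `K ≥ 1`, `C ≥ 0`, `J ≥ 0`, `r ≥ 0` there is `R = R(ρ,K,C,r,J) ≥ 0` such that
whenever `α` is a `ρ`-contracting geodesic ray based at `o` and `β` a continuous
`(K,C)`-quasi-geodesic ray based at `o` having a point of the image of `α` at
distance `≥ R` from `o` within `J` of its image, then `β` fellow-travels along `α`
for distance `r`: the image of `β` meets the closed `κ(ρ,K,C)`-neighbourhood of
`(im α) ∖ B(o,r)`. -/
theorem fellow_travel_criterion (ρ : ℝ → ℝ) (hρ : Sublinear ρ)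
    (K C J r : ℝ) (hK : 1 ≤ K) (hC : 0 ≤ C) (hJ : 0 ≤ J) (hr : 0 ≤ r) :
    ∃ R : ℝ, 0 ≤ R ∧
      ∀ (Y : Type*) [MetricSpace Y] [ProperSpace Y], GeodesicSpace Y →
        ∀ (o : Y) (α β : ℝ → Y),
          IsGeodesicRay α → α 0 = o → IsContracting ρ (α '' Ici 0) →
          ContinuousOn β (Ici 0) → IsQGRay K C β → β 0 = o →
          (∃ p ∈ α '' Ici 0, R ≤ dist o p ∧ infDist p (β '' Ici 0) ≤ J) →
          ∃ t ≥ (0:ℝ), infDist (β t) ((α '' Ici 0) \ ball o r) ≤ kappa ρ K C := by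
  classical
  obtain ⟨hmono, _hev, hlim⟩ := hρ
  have hKpos : (0:ℝ) < K := lt_of_lt_of_le one_pos hK
  have hKne : K ≠ 0 := ne_of_gt hKpos
  have h3K2 : (0:ℝ) < 3 * K ^ 2 := by nlinarith
  set κ := kappa ρ K C with hκdef
  clear_value κ
  have hκK : 3 * K ^ 2 ≤ κ := by
    rw [hκdef]; unfold kappa; exact le_trans (le_max_left _ _) (le_max_left _ _)
  have hκC : 3 * C ≤ κ := by
    rw [hκdef]; unfold kappa; exact le_trans (le_max_right _ _) (le_max_left _ _)
  have hκ3 : (3:ℝ) ≤ κ := le_trans (by nlinarith) hκK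
  have hκpos : (0:ℝ) < κ := by linarith
  -- the defining property of κ
  have hstar : ∀ x, κ ≤ x → 3 * K ^ 2 * ρ x ≤ x := by
    have hSne : ∃ R₀, R₀ ∈ {R : ℝ | 0 ≤ R ∧ ∀ x ≥ R, 3 * K ^ 2 * ρ x ≤ x} := by
      have hε : (0:ℝ) < 1 / (3 * K ^ 2) := div_pos one_pos h3K2
      have h1 : ∀ᶠ x in Filter.atTop, dist (ρ x / x) 0 < 1 / (3 * K ^ 2) :=
        Metric.tendsto_nhds.mp hlim _ hε
      obtain ⟨R₂, hR₂⟩ := Filter.eventually_atTop.mp h1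
      refine ⟨max R₂ 1, le_trans zero_le_one (le_max_right _ _), ?_⟩
      intro x hx
      have hx1 : (1:ℝ) ≤ x := le_trans (le_max_right _ _) hx
      have hx0 : (0:ℝ) < x := by linarith
      have h3' := hR₂ x (le_trans (le_max_left _ _) hx)
      rw [Real.dist_eq, sub_zero] at h3'
      have h3 : ρ x / x < 1 / (3 * K ^ 2) := lt_of_le_of_lt (le_abs_self _) h3'
      rw [div_lt_div_iff₀ hx0 h3K2] at h3
      nlinarith
    intro x hx
    have hbdd : BddBelow {R : ℝ | 0 ≤ R ∧ ∀ x ≥ R, 3 * K ^ 2 * ρ x ≤ x} :=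
      ⟨0, fun R hR => hR.1⟩
    have h1S : 1 + sInf {R : ℝ | 0 ≤ R ∧ ∀ x ≥ R, 3 * K ^ 2 * ρ x ≤ x} ≤ κ := by
      rw [hκdef]; unfold kappa; exact le_max_right _ _
    have hlt : sInf {R : ℝ | 0 ≤ R ∧ ∀ x ≥ R, 3 * K ^ 2 * ρ x ≤ x} < x := by linarith
    obtain ⟨a, ha, hax⟩ := exists_lt_of_csInf_lt hSne hlt
    exact ha.2 x hax.le
  have hx1 : (0:ℝ) ≤ K^2*κ := mul_nonneg (sq_nonneg K) hκpos.le
  have hx2 : (0:ℝ) ≤ K^2*C := mul_nonneg (sq_nonneg K) hC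
  have hx3 : (0:ℝ) ≤ K*κ := mul_nonneg hKpos.le hκpos.le
  have hx4 : (0:ℝ) ≤ K*C := mul_nonneg hKpos.le hC
  have hx5 : (0:ℝ) ≤ K^2*(J+1) := mul_nonneg (sq_nonneg K) (by linarith)
  refine ⟨r + (J+1) + 3*K^2*κ + 3*K^2*C + 2*K*κ + 2*K*C + 3*K^2*(J+1) + C + κ, ?_, ?_⟩
  · nlinarith
  intro Y _ _ _hgeoY o α β hα hα0 hcon hβc hqg hβ0 ⟨p, hpZ, hpR, hpJ⟩
  set Z : Set Y := α '' Ici 0 with hZdef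
  have hoZ : o ∈ Z := ⟨0, Set.mem_Ici.mpr le_rfl, hα0⟩
  have hZne : Z.Nonempty := ⟨o, hoZ⟩
  -- Z is closed
  have hZclosed : IsClosed Z := by
    apply IsSeqClosed.isClosed
    intro u y hu huy
    simp only [hZdef, Set.mem_image] at hu
    choose sf hsf hαs using hu
    have hd : ∀ n, sf n = dist (u n) o := by
      intro n
      rw [← hαs n, ← hα0, hα (sf n) (hsf n) 0 le_rfl]
      simp [abs_of_nonneg (Set.mem_Ici.mp (hsf n))]
    have hslim : Filter.Tendsto sf Filter.atTop (nhds (dist y o)) := by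
      have : Filter.Tendsto (fun n => dist (u n) o) Filter.atTop (nhds (dist y o)) :=
        huy.dist tendsto_const_nhds
      simpa [← hd] using this
    have hy0 : (0:ℝ) ≤ dist y o := dist_nonneg
    have hlim2 : Filter.Tendsto u Filter.atTop (nhds (α (dist y o))) := by
      rw [tendsto_iff_dist_tendsto_zero]
      have h1 : ∀ n, dist (u n) (α (dist y o)) = |sf n - dist y o| := by
        intro n; rw [← hαs n]; exact hα (sf n) (hsf n) _ hy0
      have h2 : Filter.Tendsto (fun n => |sf n - dist y o|) Filter.atTop (nhds 0) := by
        have := (hslim.sub_const (dist y o)).abs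
        simpa using this
      simpa [h1] using h2
    have : y = α (dist y o) := tendsto_nhds_unique huy hlim2
    exact this ▸ ⟨dist y o, Set.mem_Ici.mpr hy0, rfl⟩
  -- closest point projection
  have hcp : ∀ y : Y, ∃ z, z ∈ Z ∧ dist y z = infDist y Z := fun y => by
    obtain ⟨z, hz, hdz⟩ := hZclosed.exists_infDist_eq_dist hZne y
    exact ⟨z, hz, hdz.symm⟩
  choose cp hcpZ hcpd using hcp
  have hnot : ∀ y : Y, 0 < infDist y Z → y ∉ Z := by
    intro y h hy
    rw [infDist_zero_of_mem hy] at h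
    exact lt_irrefl 0 h
  -- projections of nearby points are close
  have hjump : ∀ x y : Y, x ∉ Z → y ∉ Z → dist x y < infDist y Z →
      dist (cp x) (cp y) ≤ ρ (infDist y Z) := by
    intro x y hx hy hxy
    have hsub : ClosestPoints Z x ∪ ClosestPoints Z y ⊆
        closedBall x (infDist x Z) ∪ closedBall y (infDist y Z) := by
      rintro z (⟨_, hz2⟩ | ⟨_, hz2⟩)
      · exact Or.inl (by rw [mem_closedBall, dist_comm, hz2])
      · exact Or.inr (by rw [mem_closedBall, dist_comm, hz2])
    have hb : Bornology.IsBounded (ClosestPoints Z x ∪ ClosestPoints Z y) :=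
      ((isBounded_closedBall.union isBounded_closedBall).subset hsub)
    calc dist (cp x) (cp y)
        ≤ diam (ClosestPoints Z x ∪ ClosestPoints Z y) :=
          dist_le_diam_of_mem hb (Or.inl ⟨hcpZ x, hcpd x⟩) (Or.inr ⟨hcpZ y, hcpd y⟩)
      _ ≤ ρ (infDist y Z) := hcon x y hx hy hxy
  have hρnn : ∀ y : Y, 0 < infDist y Z → 0 ≤ ρ (infDist y Z) := by
    intro y h
    have hy := hnot y h
    exact le_trans diam_nonneg (hcon y y hy hy (by rwa [dist_self]))
  -- Key lemma: projections move at speed ≤ 2/(3K) along an excursion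
  have key : ∀ n : ℕ, ∀ s t : ℝ, 0 ≤ s → s ≤ t →
      t - s ≤ n * (κ / (2 * K)) →
      (∀ u, s ≤ u → u ≤ t → κ ≤ infDist (β u) Z) →
      dist (cp (β s)) (cp (β t)) ≤
        (2 / (3 * K)) * (t - s) + ρ (2 * (infDist (β s) Z + C)) := by
    intro n
    induction n with
    | zero =>
      intro s t hs hst hlen hg
      have hts : t = s := le_antisymm (by simpa using hlen) hst
      subst hts
      have hgs := hg t le_rfl le_rfl
      have h0 : 0 < infDist (β t) Z := lt_of_lt_of_le hκpos hgs
      have hnn : 0 ≤ ρ (infDist (β t) Z) := hρnn _ h0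
      have hm : ρ (infDist (β t) Z) ≤ ρ (2 * (infDist (β t) Z + C)) := by
        apply hmono (mem_Ici.mpr h0.le) (mem_Ici.mpr (by linarith))
        linarith
      simp only [dist_self, sub_self, mul_zero, zero_add]
      linarith
    | succ n ih =>
      intro s t hs hst hlen hg
      have ht0 : (0:ℝ) ≤ t := le_trans hs hst
      obtain ⟨d, hddef⟩ : ∃ d : ℝ, d = infDist (β t) Z := ⟨_, rfl⟩
      have hdκ : κ ≤ d := by rw [hddef]; exact hg t hst le_rfl
      have hd0 : 0 < d := lt_of_lt_of_le hκpos hdκ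
      have hCd : C ≤ d / 3 := by linarith
      have hKd : K * (d / (2 * K)) = d / 2 := by field_simp
      by_cases hb : t - s ≤ d / (2 * K)
      · -- base case: one jump
        have hub := (hqg s hs t ht0).2
        have habs : |s - t| = t - s := by
          rw [abs_sub_comm, abs_of_nonneg (by linarith)]
        rw [habs] at hub
        have h1 : dist (β s) (β t) ≤ d / 2 + C := by
          have h2 : K * (t - s) ≤ K * (d / (2 * K)) :=
            mul_le_mul_of_nonneg_left hb hKpos.le
          rw [hKd] at h2
          linarith
        have hlt : dist (β s) (β t) < infDist (β t) Z := by rw [← hddef]; linarith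
        have hgs := hg s le_rfl hst
        have hj := hjump (β s) (β t) (hnot _ (lt_of_lt_of_le hκpos hgs))
          (hnot _ (by rw [← hddef]; exact hd0)) hlt
        rw [← hddef] at hj
        have hsnn : 0 ≤ infDist (β s) Z := infDist_nonneg
        have hle : d ≤ 2 * (infDist (β s) Z + C) := by
          have h3 : infDist (β t) Z ≤ infDist (β s) Z + dist (β t) (β s) :=
            infDist_le_infDist_add_dist
          rw [dist_comm] at h3
          rw [← hddef] at h3
          linarith
        have hm : ρ d ≤ ρ (2 * (infDist (β s) Z + C)) := by
          apply hmono (mem_Ici.mpr hd0.le)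
            (mem_Ici.mpr (by linarith)) hle
        have hnn : 0 ≤ (2 / (3 * K)) * (t - s) :=
          mul_nonneg (by positivity) (by linarith)
        linarith
      · -- inductive step
        push_neg at hb
        obtain ⟨t', ht'def⟩ : ∃ t' : ℝ, t' = t - d / (2 * K) := ⟨_, rfl⟩
        have hd2K : 0 < d / (2 * K) := div_pos hd0 (by linarith)
        have hst' : s ≤ t' := by
          have : s < t' := by rw [ht'def]; linarith
          exact this.le
        have ht'0 : (0:ℝ) ≤ t' := le_trans hs hst'
        have ht't : t' ≤ t := by rw [ht'def]; linarith
        have hg' : ∀ u, s ≤ u → u ≤ t' → κ ≤ infDist (β u) Z :=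
          fun u h1 h2 => hg u h1 (le_trans h2 ht't)
        have hlen' : t' - s ≤ n * (κ / (2 * K)) := by
          have hκ2K : κ / (2 * K) ≤ d / (2 * K) := by
            apply div_le_div_of_nonneg_right hdκ ?_ |>.trans_eq rfl
            · linarith
          have hn : ((n : ℝ) + 1) * (κ / (2 * K)) = n * (κ / (2 * K)) + κ / (2 * K) := by
            ring
          push_cast at hlen
          rw [ht'def]
          linarith
        have hIH := ih s t' hs hst' hlen' hg'
        -- the jump from t' to t
        have hub := (hqg t' ht'0 t ht0).2
        have habs : |t' - t| = d / (2 * K) := by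
          rw [ht'def]
          rw [show t - d / (2 * K) - t = -(d / (2 * K)) by ring, abs_neg,
            abs_of_nonneg hd2K.le]
        rw [habs] at hub
        rw [hKd] at hub
        have hlt : dist (β t') (β t) < infDist (β t) Z := by rw [← hddef]; linarith
        have hgt' := hg t' hst' ht't
        have hj := hjump (β t') (β t) (hnot _ (lt_of_lt_of_le hκpos hgt'))
          (hnot _ (by rw [← hddef]; exact hd0)) hlt
        rw [← hddef] at hj
        have hρd : ρ d ≤ (2 / (3 * K)) * (d / (2 * K)) := by
          have hsd := hstar d hdκ
          have h2 : (2 / (3 * K)) * (d / (2 * K)) = d / (3 * K ^ 2) := by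
            field_simp
          rw [h2, le_div_iff₀ h3K2]
          linarith
        have htri : dist (cp (β s)) (cp (β t)) ≤
            dist (cp (β s)) (cp (β t')) + dist (cp (β t')) (cp (β t)) :=
          dist_triangle _ _ _
        have heq : (2 / (3 * K)) * (t' - s) + (2 / (3 * K)) * (d / (2 * K)) =
            (2 / (3 * K)) * (t - s) := by rw [ht'def]; ring
        linarith
  -- find the point β t₀ close to p
  have hβne : (β '' Ici 0).Nonempty := ⟨β 0, 0, Set.mem_Ici.mpr le_rfl, rfl⟩
  have hpJ1 : infDist p (β '' Ici 0) < J + 1 := lt_of_le_of_lt hpJ (by linarith)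
  obtain ⟨q, hq, hpq⟩ := (infDist_lt_iff hβne).mp hpJ1
  obtain ⟨t₀, ht₀0, hqt₀⟩ := hq
  rw [← hqt₀] at hpq
  have ht₀J : infDist (β t₀) Z ≤ J + 1 := by
    have := infDist_le_dist_of_mem (x := β t₀) hpZ
    rw [dist_comm] at hpq
    linarith
  by_cases hcase : infDist (β t₀) Z ≤ κ
  · -- the endpoint is already κ-close to Z, far along α
    refine ⟨t₀, ht₀0, ?_⟩
    set z := cp (β t₀) with hzdef
    have hdz : dist (β t₀) z ≤ κ := by rw [hzdef, hcpd]; exact hcase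
    have hoz : r ≤ dist o z := by
      have h1 : dist o p ≤ dist o z + dist z (β t₀) + dist (β t₀) p :=
        dist_triangle4 o z (β t₀) p
      rw [dist_comm z (β t₀)] at h1
      rw [dist_comm (β t₀) p] at h1
      linarith
    have hzmem : z ∈ Z \ ball o r := by
      refine ⟨hcpZ _, ?_⟩
      rw [mem_ball, dist_comm]
      linarith
    exact le_trans (infDist_le_dist_of_mem hzmem) hdz
  · -- excursion: last time s₁ where β is κ-close to Z before t₀
    push_neg at hcase
    set g : ℝ → ℝ := fun u => infDist (β u) Z with hgdef
    have hgcont : ContinuousOn g (Icc 0 t₀) := by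
      have : ContinuousOn β (Icc 0 t₀) := hβc.mono (fun x hx => hx.1)
      exact (continuous_infDist_pt Z).comp_continuousOn this
    set A := {u : ℝ | u ∈ Icc 0 t₀ ∧ g u ≤ κ} with hAdef
    have hA0 : 0 ∈ A := by
      refine ⟨Set.mem_Icc.mpr ⟨le_rfl, ht₀0⟩, ?_⟩
      show infDist (β 0) Z ≤ κ
      rw [hβ0, infDist_zero_of_mem hoZ]
      exact hκpos.le
    have hAclosed : IsClosed A := by
      have hAeq : A = Icc 0 t₀ ∩ g ⁻¹' Iic κ := rfl
      rw [hAeq]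
      exact hgcont.preimage_isClosed_of_isClosed isClosed_Icc isClosed_Iic
    have hAcomp : IsCompact A :=
      isCompact_Icc.of_isClosed_subset hAclosed (fun u hu => hu.1)
    set s₁ := sSup A with hs₁def
    have hs₁A : s₁ ∈ A := hAcomp.sSup_mem ⟨0, hA0⟩
    have hs₁0 : 0 ≤ s₁ := hs₁A.1.1
    have hs₁t₀ : s₁ ≤ t₀ := hs₁A.1.2
    have hgs₁le : g s₁ ≤ κ := hs₁A.2
    have hup : ∀ u, s₁ < u → u ∈ A → False := by
      intro u h1 h2
      exact absurd (le_csSup hAcomp.bddAbove h2) (not_le.mpr h1)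
    have hgt : ∀ u, s₁ < u → u ≤ t₀ → κ < g u := by
      intro u h1 h2
      by_contra h
      push_neg at h
      exact hup u h1 ⟨⟨le_trans hs₁0 h1.le, h2⟩, h⟩
    have hs₁lt : s₁ < t₀ := by
      rcases lt_or_eq_of_le hs₁t₀ with h | h
      · exact h
      · exact absurd (h ▸ hgs₁le) (not_le.mpr hcase)
    have hgs₁ge : κ ≤ g s₁ := by
      by_contra h
      push_neg at h
      have hc := hgcont s₁ ⟨hs₁0, hs₁t₀⟩
      rw [Metric.continuousWithinAt_iff] at hc
      obtain ⟨δ, hδ0, hδ⟩ := hc (κ - g s₁) (by linarith)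
      set u := min (s₁ + δ / 2) t₀ with hudef
      have hu1 : s₁ < u := lt_min (by linarith) hs₁lt
      have humem : u ∈ Icc 0 t₀ := Set.mem_Icc.mpr ⟨le_trans hs₁0 hu1.le, min_le_right _ _⟩
      have hud : dist u s₁ < δ := by
        have hle := min_le_left (s₁ + δ / 2) t₀
        rw [Real.dist_eq, abs_of_nonneg (by linarith)]
        linarith
      have h2 := hδ humem hud
      rw [Real.dist_eq] at h2
      have h3 : g u < κ := by
        have := (abs_lt.mp h2).2
        linarith
      exact hup u hu1 ⟨humem, h3.le⟩
    have hgs₁ : g s₁ = κ := le_antisymm hgs₁le hgs₁ge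
    have hgall : ∀ u, s₁ ≤ u → u ≤ t₀ → κ ≤ infDist (β u) Z := by
      intro u h1 h2
      rcases lt_or_eq_of_le h1 with h | h
      · exact (hgt u h h2).le
      · rw [← h]; exact hgs₁ge
    -- apply the key lemma
    have hκ2K : (0:ℝ) < κ / (2 * K) := div_pos hκpos (by linarith)
    have hlen : t₀ - s₁ ≤ (⌈(t₀ - s₁) / (κ / (2 * K))⌉₊ : ℝ) * (κ / (2 * K)) := by
      rw [← div_le_iff₀ hκ2K]
      exact Nat.le_ceil _
    have hkey := key _ s₁ t₀ hs₁0 hs₁t₀ hlen hgall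
    -- convert to a bound on t₀ - s₁
    obtain ⟨T, hTdef⟩ : ∃ T : ℝ, T = t₀ - s₁ := ⟨_, rfl⟩
    rw [← hTdef] at hkey
    have hT0 : 0 ≤ T := by rw [hTdef]; linarith
    have hlow := (hqg s₁ hs₁0 t₀ ht₀0).1
    have hupp := (hqg s₁ hs₁0 t₀ ht₀0).2
    have habs : |s₁ - t₀| = T := by
      rw [abs_sub_comm, abs_of_nonneg (by linarith), hTdef]
    rw [habs] at hlow hupp
    have htri : dist (β s₁) (β t₀) ≤
        infDist (β s₁) Z + dist (cp (β s₁)) (cp (β t₀)) + infDist (β t₀) Z := by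
      have h1 : dist (β s₁) (β t₀) ≤
          dist (β s₁) (cp (β s₁)) + dist (cp (β s₁)) (cp (β t₀)) +
            dist (cp (β t₀)) (β t₀) := dist_triangle4 _ _ _ _
      rw [hcpd, dist_comm (cp (β t₀)) (β t₀), hcpd] at h1
      exact h1
    have hgs₁' : infDist (β s₁) Z = κ := hgs₁
    have hρ₂star : 3 * K ^ 2 * ρ (2 * (infDist (β s₁) Z + C)) ≤ 2 * (κ + C) := by
      rw [hgs₁']
      have := hstar (2 * (κ + C)) (by linarith)
      linarith
    have hρ₂nn : 0 ≤ ρ (2 * (infDist (β s₁) Z + C)) := by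
      have h0 : 0 < infDist (β s₁) Z := by rw [hgs₁']; exact hκpos
      refine le_trans (hρnn _ h0) ?_
      apply hmono (mem_Ici.mpr h0.le) (mem_Ici.mpr (by linarith))
      linarith
    -- eliminate divisions
    have hkey' : K * dist (cp (β s₁)) (cp (β t₀)) ≤
        (2 / 3) * T + K * ρ (2 * (infDist (β s₁) Z + C)) := by
      have h1 := mul_le_mul_of_nonneg_left hkey hKpos.le
      have h2 : K * ((2 / (3 * K)) * T + ρ (2 * (infDist (β s₁) Z + C))) =
          (2 / 3) * T + K * ρ (2 * (infDist (β s₁) Z + C)) := by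
        field_simp
      linarith
    have hKρ : 3 * (K * ρ (2 * (infDist (β s₁) Z + C))) ≤ 2 * (κ + C) := by
      nlinarith [mul_nonneg (mul_nonneg (by linarith : (0:ℝ) ≤ 3 * K) hρ₂nn)
        (by linarith : (0:ℝ) ≤ K - 1)]
    have hlow' : T - K * C ≤ K * dist (β s₁) (β t₀) := by
      have h1 := mul_le_mul_of_nonneg_left hlow hKpos.le
      have h2 : K * ((1 / K) * T - C) = T - K * C := by field_simp; try ring
      linarith
    -- T bound
    have hTbound : T ≤ 3*K*κ + 2*κ + 2*C + 3*K*(J+1) + 3*K*C := by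
      have hd1 : K * dist (β s₁) (β t₀) ≤
          K * (κ + dist (cp (β s₁)) (cp (β t₀)) + (J + 1)) := by
        apply mul_le_mul_of_nonneg_left _ hKpos.le
        rw [hgs₁'] at htri
        linarith
      linarith
    have hβd : dist (β t₀) (β s₁) ≤
        3*K^2*κ + 2*K*κ + 2*K*C + 3*K^2*(J+1) + 3*K^2*C + C := by
      rw [dist_comm]
      nlinarith [mul_le_mul_of_nonneg_left hTbound hKpos.le, hupp]
    refine ⟨s₁, hs₁0, ?_⟩
    set z := cp (β s₁) with hzdef
    have hdz : dist (β s₁) z = κ := by rw [hzdef, hcpd]; exact hgs₁'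
    have hoz : r ≤ dist o z := by
      have h1 : dist o p ≤ dist o z + dist z p := dist_triangle _ _ _
      have h2 : dist z p ≤ dist z (β s₁) + dist (β s₁) (β t₀) + dist (β t₀) p :=
        dist_triangle4 _ _ _ _
      rw [dist_comm z (β s₁)] at h2
      rw [dist_comm (β t₀) p] at h2
      rw [dist_comm (β s₁) (β t₀)] at h2
      linarith
    have hzmem : z ∈ Z \ ball o r := by
      refine ⟨hcpZ _, ?_⟩
      rw [mem_ball, dist_comm]
      linarith
    calc infDist (β s₁) (Z \ ball o r) ≤ dist (β s₁) z := infDist_le_dist_of_mem hzmem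
      _ ≤ κ := hdz.le
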